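/- arXiv:1312.1237 — 2 statements merged into one kernel-verified Lean document; each statement's English description precedes it below -/
import Mathlib

section
/- For an odd prime p and a, b ∈ ℚ_p^*, writing a = p^α a' and b = p^β b' with a', b' p-adic units, the Hilbert symbol satisfies (a,b)_p = (-1)^{((p-1)/2)·αβ} · (a'/p)^β · (b'/p)^α, where (·/p) denotes the Legendre symbol applied to the residue of the unit. -/
open Classical in
/-- The Hilbert symbol over `ℚ_[p]`: `1` if `z² = a x² + b y²` has a nontrivial
solution, `-1` otherwise. (Valued in `ℚ`.) -/
noncomputable def padicHilbertSym (p : ℕ) [Fact p.Prime] (a b : ℚ_[p]) : ℚ :=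
  if ∃ x y z : ℚ_[p], ¬(x = 0 ∧ y = 0 ∧ z = 0) ∧ z ^ 2 = a * x ^ 2 + b * y ^ 2 then 1 else -1

open PadicInt

section aux
variable {p : ℕ} [Fact p.Prime]

private lemma pQ_ne_zero : (p : ℚ_[p]) ≠ 0 :=
  Nat.cast_ne_zero.2 (Fact.out (p := p.Prime)).ne_zero

private lemma val_eq_of_norm {x : ℚ_[p]} (hx : x ≠ 0) {n : ℤ} (h : ‖x‖ = (p : ℝ) ^ (-n)) :
    x.valuation = n := by
  have hp1 : (1 : ℝ) < p := by exact_mod_cast (Fact.out (p := p.Prime)).one_lt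
  have h2 := (Padic.norm_eq_zpow_neg_valuation hx).symm.trans h
  have h3 := (zpow_right_strictMono₀ hp1).injective h2
  omega

private lemma val_p_zpow (n : ℤ) : ((p : ℚ_[p]) ^ n).valuation = n :=
  val_eq_of_norm (zpow_ne_zero _ pQ_ne_zero) (Padic.norm_p_zpow n)

private lemma unit_coe_ne_zero (u : ℤ_[p]ˣ) : ((u : ℤ_[p]) : ℚ_[p]) ≠ 0 :=
  PadicInt.coe_ne_zero.2 u.ne_zero

private lemma val_unit_coe (u : ℤ_[p]ˣ) : ((u : ℤ_[p]) : ℚ_[p]).valuation = 0 :=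
  val_eq_of_norm (unit_coe_ne_zero u) (by
    rw [← PadicInt.norm_def, PadicInt.norm_units]; simp)

private lemma toZMod_unit_ne_zero (u : ℤ_[p]ˣ) : toZMod (u : ℤ_[p]) ≠ 0 :=
  ((toZMod (p := p)).isUnit_map u.isUnit).ne_zero

private lemma toZMod_eq_zero_iff (x : ℤ_[p]) : toZMod x = 0 ↔ ‖x‖ < 1 := by
  rw [← RingHom.mem_ker, ker_toZMod, maximalIdeal_eq_span_p, Ideal.mem_span_singleton,
    ← norm_lt_one_iff_dvd]

private lemma norm_eq_one_of_residue {c : ℤ_[p]} (h : toZMod c ≠ 0) : ‖c‖ = 1 :=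
  le_antisymm c.norm_le_one (not_lt.1 fun hlt => h ((toZMod_eq_zero_iff c).2 hlt))

private lemma val_coe_eq_zero_of_residue {c : ℤ_[p]} (h : toZMod c ≠ 0) :
    ((c : ℚ_[p])).valuation = 0 := by
  have hc : (c : ℚ_[p]) ≠ 0 := PadicInt.coe_ne_zero.2 (fun h0 => h (by simp [h0]))
  exact val_eq_of_norm hc (by rw [← PadicInt.norm_def, norm_eq_one_of_residue h]; simp)

private lemma val_sq (x : ℚ_[p]) (hx : x ≠ 0) : (x ^ 2).valuation = 2 * x.valuation := by
  rw [sq, Padic.valuation_mul hx hx]; ring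

private lemma val_add_cases {x y : ℚ_[p]} (hx : x ≠ 0) (hy : y ≠ 0)
    (h : x.valuation ≠ y.valuation) :
    x + y ≠ 0 ∧ ((x + y).valuation = x.valuation ∨ (x + y).valuation = y.valuation) := by
  have hp1 : (1 : ℝ) < p := by exact_mod_cast (Fact.out (p := p.Prime)).one_lt
  have hnorm : ‖x‖ ≠ ‖y‖ := by
    rw [Padic.norm_eq_zpow_neg_valuation hx, Padic.norm_eq_zpow_neg_valuation hy]
    intro hc
    exact h (by have := (zpow_right_strictMono₀ hp1).injective hc; omega)
  have hxy : x + y ≠ 0 := by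
    intro h0
    have : ‖x‖ = ‖y‖ := by
      have : y = -x := by linear_combination h0
      rw [this, norm_neg]
    exact hnorm this
  refine ⟨hxy, ?_⟩
  have hmax := Padic.add_eq_max_of_ne hnorm
  rcases max_cases ‖x‖ ‖y‖ with ⟨he, _⟩ | ⟨he, _⟩
  · left
    exact val_eq_of_norm hxy (by rw [hmax, he, ← Padic.norm_eq_zpow_neg_valuation hx])
  · right
    exact val_eq_of_norm hxy (by rw [hmax, he, ← Padic.norm_eq_zpow_neg_valuation hy])

section aux2
open PadicInt
variable {p : ℕ} [Fact p.Prime]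

private noncomputable def resInt (u : ℤ_[p]ˣ) : ℤ := ((toZMod (u : ℤ_[p])).val : ℤ)

private lemma resInt_cast (u : ℤ_[p]ˣ) : ((resInt u : ℤ) : ZMod p) = toZMod (u : ℤ_[p]) := by
  have : NeZero p := ⟨(Fact.out (p := p.Prime)).ne_zero⟩
  simp only [resInt, Int.cast_natCast]
  exact ZMod.natCast_rightInverse _

private lemma resInt_cast_ne_zero (u : ℤ_[p]ˣ) : ((resInt u : ℤ) : ZMod p) ≠ 0 := by
  rw [resInt_cast]; exact toZMod_unit_ne_zero u

private lemma legendre_resInt_eq_one_iff (u : ℤ_[p]ˣ) :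
    legendreSym p (resInt u) = 1 ↔ IsSquare (toZMod (u : ℤ_[p])) := by
  rw [legendreSym.eq_one_iff p (resInt_cast_ne_zero u), resInt_cast]

private lemma legendre_resInt_eq_neg_one_iff (u : ℤ_[p]ˣ) :
    legendreSym p (resInt u) = -1 ↔ ¬IsSquare (toZMod (u : ℤ_[p])) := by
  rw [legendreSym.eq_neg_one_iff p, resInt_cast]

private lemma legendre_resInt_one_or (u : ℤ_[p]ˣ) :
    legendreSym p (resInt u) = 1 ∨ legendreSym p (resInt u) = -1 :=
  legendreSym.eq_one_or_neg_one p (resInt_cast_ne_zero u)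

/-- Hensel lifting of square roots. -/
private lemma exists_sqrt (hp2 : p ≠ 2) {c : ℤ_[p]} {s : ZMod p} (hs : s ≠ 0)
    (h : toZMod c = s ^ 2) : ∃ t : ℤ_[p], t ^ 2 = c := by
  have : NeZero p := ⟨(Fact.out (p := p.Prime)).ne_zero⟩
  set a : ℤ_[p] := (s.val : ℤ_[p]) with ha_def
  have ha : toZMod a = s := by
    rw [ha_def, map_natCast]
    exact ZMod.natCast_rightInverse _
  set F : Polynomial ℤ_[p] := Polynomial.X ^ 2 - Polynomial.C c with hF
  have heval : ∀ t : ℤ_[p], F.eval t = t ^ 2 - c := by intro t; simp [hF]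
  have hderiv : ∀ t : ℤ_[p], F.derivative.eval t = 2 * t := by
    intro t
    simp [hF, Polynomial.derivative_sub, Polynomial.derivative_X_pow]
    exact Or.inl one_add_one_eq_two
  have h2a : toZMod (F.derivative.eval a) ≠ 0 := by
    rw [hderiv, map_mul, ha, map_ofNat]
    have h2 : (2 : ZMod p) ≠ 0 := by
      intro hc
      have hdvd : (p : ℕ) ∣ 2 := by
        rw [← ZMod.natCast_eq_zero_iff]
        exact_mod_cast hc
      exact hp2 ((Nat.prime_dvd_prime_iff_eq Fact.out Nat.prime_two).1 hdvd)
    exact mul_ne_zero h2 hs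
  have hda : ‖F.derivative.eval a‖ = 1 := norm_eq_one_of_residue h2a
  have hnorm : ‖F.eval a‖ < ‖F.derivative.eval a‖ ^ 2 := by
    rw [hda, one_pow, heval]
    refine (toZMod_eq_zero_iff _).1 ?_
    rw [map_sub, map_pow, ha, h, sub_self]
  obtain ⟨z, hz, -⟩ := hensels_lemma hnorm
  refine ⟨z, ?_⟩
  have := heval z
  rw [show F.eval z = 0 by simpa using hz] at this
  exact sub_eq_zero.1 this.symm

end aux2
section sol
open PadicInt
variable {p : ℕ} [Fact p.Prime]

private lemma exists_repr {x : ℚ_[p]} (hx : x ≠ 0) :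
    ∃ u : ℤ_[p]ˣ, x = (p : ℚ_[p]) ^ x.valuation * ((u : ℤ_[p]) : ℚ_[p]) := by
  have hpR : (p : ℝ) ≠ 0 := by exact_mod_cast (Fact.out (p := p.Prime)).ne_zero
  set y : ℚ_[p] := x * (p : ℚ_[p]) ^ (-x.valuation) with hy
  have hyn : ‖y‖ = 1 := by
    rw [hy, _root_.norm_mul, Padic.norm_p_zpow, Padic.norm_eq_zpow_neg_valuation hx, neg_neg,
      ← zpow_add₀ hpR, neg_add_cancel, zpow_zero]
  set t : ℤ_[p] := ⟨y, le_of_eq hyn⟩ with ht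
  have hu : IsUnit t := PadicInt.isUnit_iff.2 (by rw [PadicInt.norm_def]; exact hyn)
  refine ⟨hu.unit, ?_⟩
  have hcoe : ((hu.unit : ℤ_[p]) : ℚ_[p]) = y := by rw [hu.unit_spec]
  rw [hcoe, hy, ← mul_assoc, mul_comm ((p : ℚ_[p]) ^ x.valuation) x, mul_assoc,
    ← zpow_add₀ pQ_ne_zero, add_neg_cancel, zpow_zero, mul_one]

private def Sol (p : ℕ) [Fact p.Prime] (a b : ℚ_[p]) : Prop :=
  ∃ x y z : ℚ_[p], ¬(x = 0 ∧ y = 0 ∧ z = 0) ∧ z ^ 2 = a * x ^ 2 + b * y ^ 2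

private lemma sol_symm {a b : ℚ_[p]} (h : Sol p a b) : Sol p b a := by
  obtain ⟨x, y, z, hne, he⟩ := h
  exact ⟨y, x, z, fun ⟨h1, h2, h3⟩ => hne ⟨h2, h1, h3⟩, by rw [he]; ring⟩

private lemma sol_mul_sq {a b : ℚ_[p]} (c : ℚ_[p]) (hc : c ≠ 0) (h : Sol p a b) :
    Sol p (c ^ 2 * a) b := by
  obtain ⟨x, y, z, hne, he⟩ := h
  refine ⟨c⁻¹ * x, y, z, ?_, ?_⟩
  · rintro ⟨h1, h2, h3⟩
    refine hne ⟨?_, h2, h3⟩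
    have := mul_eq_zero.1 h1
    simpa [inv_eq_zero, hc] using this
  · have hcc : c * c⁻¹ = 1 := mul_inv_cancel₀ hc
    calc z ^ 2 = a * x ^ 2 + b * y ^ 2 := he
      _ = c ^ 2 * a * (c⁻¹ * x) ^ 2 + b * y ^ 2 := by
          have : c ^ 2 * a * (c⁻¹ * x) ^ 2 = (c * c⁻¹) ^ 2 * (a * x ^ 2) := by ring
          rw [this, hcc, one_pow, one_mul]

private lemma sol_mul_sq_iff {a b : ℚ_[p]} (c : ℚ_[p]) (hc : c ≠ 0) :
    Sol p (c ^ 2 * a) b ↔ Sol p a b := by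
  constructor
  · intro h
    have := sol_mul_sq c⁻¹ (inv_ne_zero hc) h
    rwa [← mul_assoc, ← mul_pow, inv_mul_cancel₀ hc, one_pow, one_mul] at this
  · exact sol_mul_sq c hc

private lemma nonsquare_e1 {w : ℤ_[p]ˣ} (hw : ¬IsSquare (toZMod (w : ℤ_[p])))
    {z y : ℚ_[p]} (h : z ^ 2 = ((w : ℤ_[p]) : ℚ_[p]) * y ^ 2) : z = 0 ∧ y = 0 := by
  by_cases hy : y = 0
  · refine ⟨?_, hy⟩
    rw [hy] at h
    simpa using pow_eq_zero_iff (n := 2) (by norm_num) |>.1 (by simpa using h)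
  · exfalso
    have hz : z ≠ 0 := by
      intro hz0
      rw [hz0] at h
      have h2 : ((w : ℤ_[p]) : ℚ_[p]) * y ^ 2 = 0 := by simpa using h.symm
      rcases mul_eq_zero.1 h2 with h3 | h3
      · exact unit_coe_ne_zero w h3
      · exact hy (pow_eq_zero_iff two_ne_zero |>.1 h3)
    have ht : (z / y) ^ 2 = ((w : ℤ_[p]) : ℚ_[p]) := by
      field_simp at h ⊢
      linear_combination h
    have htne : z / y ≠ 0 := div_ne_zero hz hy
    have hnt : ‖z / y‖ = 1 := by
      have h1 : ‖z / y‖ ^ 2 = 1 := by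
        rw [← _root_.norm_pow, ht, ← PadicInt.norm_def, PadicInt.norm_units]
      nlinarith [norm_nonneg (z / y)]
    set t : ℤ_[p] := ⟨z / y, le_of_eq hnt⟩ with htt
    have ht2 : t ^ 2 = (w : ℤ_[p]) := by
      apply Subtype.ext
      show ((z / y) ^ 2 : ℚ_[p]) = _
      exact ht
    exact hw ⟨toZMod t, by rw [← ht2, sq, map_mul]⟩

private lemma nonsquare_val_even {w : ℤ_[p]ˣ} (hw : ¬IsSquare (toZMod (w : ℤ_[p])))
    {z y : ℚ_[p]} (h : ¬(z = 0 ∧ y = 0)) :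
    z ^ 2 - ((w : ℤ_[p]) : ℚ_[p]) * y ^ 2 ≠ 0 ∧
      Even ((z ^ 2 - ((w : ℤ_[p]) : ℚ_[p]) * y ^ 2).valuation) := by
  set W : ℚ_[p] := ((w : ℤ_[p]) : ℚ_[p]) with hW
  have hWne : W ≠ 0 := unit_coe_ne_zero w
  have hnegW : (-W).valuation = 0 := by
    have : -W = (((-w : ℤ_[p]ˣ) : ℤ_[p]) : ℚ_[p]) := by
      rw [Units.val_neg]; push_cast; ring
    rw [this]; exact val_unit_coe (-w)
  have hnegWne : -W ≠ 0 := neg_ne_zero.2 hWne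
  have hne : z ^ 2 - W * y ^ 2 ≠ 0 := by
    intro h0
    exact h (nonsquare_e1 hw (by linear_combination h0))
  refine ⟨hne, ?_⟩
  by_cases hz : z = 0
  · have hy : y ≠ 0 := fun hy => h ⟨hz, hy⟩
    have hrw : z ^ 2 - W * y ^ 2 = -W * y ^ 2 := by rw [hz]; ring
    rw [hrw, Padic.valuation_mul hnegWne (pow_ne_zero 2 hy), val_sq _ hy, hnegW]
    exact ⟨y.valuation, by ring⟩
  by_cases hy : y = 0
  · have hrw : z ^ 2 - W * y ^ 2 = z ^ 2 := by rw [hy]; ring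
    rw [hrw, val_sq _ hz]
    exact ⟨z.valuation, by ring⟩
  have hz2 : z ^ 2 ≠ 0 := pow_ne_zero 2 hz
  have hwy2 : -(W * y ^ 2) ≠ 0 := neg_ne_zero.2 (mul_ne_zero hWne (pow_ne_zero 2 hy))
  have hv1 : (z ^ 2).valuation = 2 * z.valuation := val_sq _ hz
  have hv2 : (-(W * y ^ 2)).valuation = 2 * y.valuation := by
    have hrw : -(W * y ^ 2) = -W * y ^ 2 := by ring
    rw [hrw, Padic.valuation_mul hnegWne (pow_ne_zero 2 hy), val_sq _ hy, hnegW, zero_add]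
  rcases eq_or_ne z.valuation y.valuation with hvv | hvv
  · -- equal valuations: unit part argument
    obtain ⟨zu, hzu⟩ := exists_repr hz
    obtain ⟨yu, hyu⟩ := exists_repr hy
    set k : ℤ := z.valuation with hk
    set c : ℤ_[p] := (zu : ℤ_[p]) ^ 2 - (w : ℤ_[p]) * (yu : ℤ_[p]) ^ 2 with hc
    have hcres : toZMod c ≠ 0 := by
      intro h0
      apply hw
      rw [hc, map_sub, map_mul, map_pow, map_pow, sub_eq_zero] at h0
      have hyures : toZMod (yu : ℤ_[p]) ≠ 0 := toZMod_unit_ne_zero yu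
      refine ⟨toZMod (zu : ℤ_[p]) * (toZMod (yu : ℤ_[p]))⁻¹, ?_⟩
      have h1 : toZMod (zu : ℤ_[p]) ^ 2 = toZMod (w : ℤ_[p]) * toZMod (yu : ℤ_[p]) ^ 2 :=
        h0
      field_simp
      linear_combination h1.symm
    have hcval : ((c : ℚ_[p])).valuation = 0 := val_coe_eq_zero_of_residue hcres
    have hcne : (c : ℚ_[p]) ≠ 0 := PadicInt.coe_ne_zero.2
      (fun h0 => hcres (by simp [h0]))
    have hexp : z ^ 2 - W * y ^ 2 = (p : ℚ_[p]) ^ (2 * k) * (c : ℚ_[p]) := by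
      have hcast : ((c : ℤ_[p]) : ℚ_[p]) =
          ((zu : ℤ_[p]) : ℚ_[p]) ^ 2 - ((w : ℤ_[p]) : ℚ_[p]) * ((yu : ℤ_[p]) : ℚ_[p]) ^ 2 := by
        rw [hc]; push_cast; ring
      have hpow : (p : ℚ_[p]) ^ (2 * k) = ((p : ℚ_[p]) ^ k) ^ (2 : ℕ) := by
        rw [← zpow_natCast ((p : ℚ_[p]) ^ k) 2, ← zpow_mul]
        norm_num [mul_comm]
      rw [← hvv] at hyu
      rw [hzu, hyu, hW, hcast, hpow]
      ring
    rw [hexp, Padic.valuation_mul (zpow_ne_zero _ pQ_ne_zero) hcne, val_p_zpow, hcval,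
      add_zero]
    exact ⟨k, by ring⟩
  · have hvne : (z ^ 2).valuation ≠ (-(W * y ^ 2)).valuation := by
      rw [hv1, hv2]; omega
    have hrw : z ^ 2 - W * y ^ 2 = z ^ 2 + -(W * y ^ 2) := by ring
    rw [hrw]
    rcases (val_add_cases hz2 hwy2 hvne).2 with h1 | h1
    · rw [h1, hv1]; exact ⟨z.valuation, by ring⟩
    · rw [h1, hv2]; exact ⟨y.valuation, by ring⟩

end sol
section cases
open PadicInt Polynomial
variable {p : ℕ} [Fact p.Prime]

private lemma toZMod_inv (u : ℤ_[p]ˣ) :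
    toZMod ((u⁻¹ : ℤ_[p]ˣ) : ℤ_[p]) = (toZMod (u : ℤ_[p]))⁻¹ :=
  eq_inv_of_mul_eq_one_left (by rw [← map_mul, Units.inv_mul, map_one])

private lemma zmod_conic (hp2 : p ≠ 2) (u v : ZMod p) (hu : u ≠ 0) :
    ∃ x z : ZMod p, z ^ 2 = u * x ^ 2 + v := by
  have hcard : Fintype.card (ZMod p) % 2 = 1 := by
    rw [ZMod.card]
    exact Nat.odd_iff.1 ((Fact.out (p := p.Prime)).odd_of_ne_two hp2)
  have hf2 : (C u * X ^ 2 + C v : (ZMod p)[X]).degree = 2 := by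
    have := Polynomial.degree_quadratic (b := (0 : ZMod p)) (c := v) hu
    simpa using this
  have hg2 : (-(X ^ 2) : (ZMod p)[X]).degree = 2 := by
    rw [Polynomial.degree_neg, Polynomial.degree_X_pow]
    rfl
  obtain ⟨x, z, hxz⟩ := FiniteField.exists_root_sum_quadratic hf2 hg2 hcard
  refine ⟨x, z, ?_⟩
  simp only [eval_add, eval_mul, eval_pow, eval_C, eval_X, eval_neg] at hxz
  linear_combination -hxz

private lemma sol_of_unit_sq (hp2 : p ≠ 2) {a : ℚ_[p]} (v : ℤ_[p]ˣ)
    (hv : IsSquare (toZMod (v : ℤ_[p]))) : Sol p a ((v : ℤ_[p]) : ℚ_[p]) := by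
  obtain ⟨r, hr⟩ := hv
  have hr' : toZMod (v : ℤ_[p]) = r ^ 2 := by rw [hr, sq]
  have hrne : r ≠ 0 := by
    intro h0
    rw [h0] at hr'
    exact toZMod_unit_ne_zero v (by simpa using hr')
  obtain ⟨t, ht⟩ := exists_sqrt hp2 hrne hr'
  refine ⟨0, 1, (t : ℚ_[p]), fun ⟨_, h1, _⟩ => one_ne_zero h1, ?_⟩
  have hc := congrArg (fun r : ℤ_[p] => (r : ℚ_[p])) ht
  push_cast at hc
  rw [hc]
  ring

private lemma sol_unit_unit (hp2 : p ≠ 2) (u v : ℤ_[p]ˣ) :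
    Sol p ((u : ℤ_[p]) : ℚ_[p]) ((v : ℤ_[p]) : ℚ_[p]) := by
  have : NeZero p := ⟨(Fact.out (p := p.Prime)).ne_zero⟩
  obtain ⟨x0, z0, hxz⟩ :=
    zmod_conic hp2 (toZMod (u : ℤ_[p])) (toZMod (v : ℤ_[p])) (toZMod_unit_ne_zero u)
  by_cases hz0 : z0 = 0
  · -- u x0² + v ≡ 0 with x0 ≠ 0 : take x = t with t² = -(v·u⁻¹), y = 1, z = 0
    have hxz' : (0 : ZMod p) = toZMod (u : ℤ_[p]) * x0 ^ 2 + toZMod (v : ℤ_[p]) := by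
      simpa [hz0] using hxz
    have hx0 : x0 ≠ 0 := by
      intro h0
      rw [h0] at hxz'
      exact toZMod_unit_ne_zero v (by simpa using hxz'.symm)
    set c : ℤ_[p] := -((v : ℤ_[p]) * ((u⁻¹ : ℤ_[p]ˣ) : ℤ_[p])) with hcdef
    have hres : toZMod c = x0 ^ 2 := by
      have hv' : toZMod (v : ℤ_[p]) = -(toZMod (u : ℤ_[p]) * x0 ^ 2) := by
        linear_combination -hxz'
      rw [hcdef, map_neg, map_mul, toZMod_inv, hv']
      have hu0 := toZMod_unit_ne_zero u
      field_simp
    obtain ⟨t, ht⟩ := exists_sqrt hp2 hx0 hres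
    have hid : (u : ℤ_[p]) * t ^ 2 + (v : ℤ_[p]) = 0 := by
      have huu : (u : ℤ_[p]) * ((u⁻¹ : ℤ_[p]ˣ) : ℤ_[p]) = 1 := u.mul_inv
      rw [ht, hcdef]
      linear_combination (-(v : ℤ_[p])) * huu
    refine ⟨(t : ℚ_[p]), 1, 0, fun ⟨_, h1, _⟩ => one_ne_zero h1, ?_⟩
    have hc := congrArg (fun r : ℤ_[p] => (r : ℚ_[p])) hid
    push_cast at hc
    linear_combination -hc
  · set xq : ℤ_[p] := (x0.val : ℤ_[p]) with hxq
    have hxqres : toZMod xq = x0 := by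
      rw [hxq, map_natCast]
      exact ZMod.natCast_rightInverse _
    set c : ℤ_[p] := (u : ℤ_[p]) * xq ^ 2 + (v : ℤ_[p]) with hcdef
    have hres : toZMod c = z0 ^ 2 := by
      rw [hcdef, map_add, map_mul, map_pow, hxqres]
      exact hxz.symm
    obtain ⟨t, ht⟩ := exists_sqrt hp2 hz0 hres
    refine ⟨(xq : ℚ_[p]), 1, (t : ℚ_[p]), fun ⟨_, h1, _⟩ => one_ne_zero h1, ?_⟩
    have hc := congrArg (fun r : ℤ_[p] => (r : ℚ_[p])) (ht.trans hcdef)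
    push_cast at hc
    linear_combination hc

private lemma sol_p_unit_iff (hp2 : p ≠ 2) (u v : ℤ_[p]ˣ) :
    Sol p ((p : ℚ_[p]) * ((u : ℤ_[p]) : ℚ_[p])) ((v : ℤ_[p]) : ℚ_[p]) ↔
      IsSquare (toZMod (v : ℤ_[p])) := by
  constructor
  · rintro ⟨x, y, z, hne, he⟩
    by_contra hv
    by_cases hx : x = 0
    · have he' : z ^ 2 = ((v : ℤ_[p]) : ℚ_[p]) * y ^ 2 := by
        rw [hx] at he
        linear_combination he
      obtain ⟨hz0, hy0⟩ := nonsquare_e1 hv he'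
      exact hne ⟨hx, hy0, hz0⟩
    · have hnb : ¬(z = 0 ∧ y = 0) := by
        rintro ⟨hz0, hy0⟩
        rw [hz0, hy0] at he
        have hx0 : x = 0 := by
          have h2 : (p : ℚ_[p]) * ((u : ℤ_[p]) : ℚ_[p]) * x ^ 2 = 0 := by
            linear_combination -he
          rcases mul_eq_zero.1 h2 with h3 | h3
          · exact absurd h3 (mul_ne_zero pQ_ne_zero (unit_coe_ne_zero u))
          · exact pow_eq_zero_iff two_ne_zero |>.1 h3
        exact hx hx0
      have hval := nonsquare_val_even hv hnb
      have heq : z ^ 2 - ((v : ℤ_[p]) : ℚ_[p]) * y ^ 2 =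
          (p : ℚ_[p]) * ((u : ℤ_[p]) : ℚ_[p]) * x ^ 2 := by
        linear_combination he
      have hUne := unit_coe_ne_zero u
      have hodd : ((p : ℚ_[p]) * ((u : ℤ_[p]) : ℚ_[p]) * x ^ 2).valuation =
          1 + 2 * x.valuation := by
        rw [Padic.valuation_mul (mul_ne_zero pQ_ne_zero hUne) (pow_ne_zero 2 hx),
          Padic.valuation_mul pQ_ne_zero hUne, Padic.valuation_p, val_unit_coe,
          val_sq _ hx]
        ring
      obtain ⟨m, hm⟩ := hval.2
      rw [heq, hodd] at hm
      omega
  · exact fun hv => sol_of_unit_sq hp2 v hv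

private lemma sol_pp_iff (hp2 : p ≠ 2) (u v : ℤ_[p]ˣ) :
    Sol p ((p : ℚ_[p]) * ((u : ℤ_[p]) : ℚ_[p])) ((p : ℚ_[p]) * ((v : ℤ_[p]) : ℚ_[p])) ↔
      IsSquare (toZMod ((-(u * v) : ℤ_[p]ˣ) : ℤ_[p])) := by
  have hWcast : ((((-(u * v) : ℤ_[p]ˣ)) : ℤ_[p]) : ℚ_[p]) =
      -(((u : ℤ_[p]) : ℚ_[p]) * ((v : ℤ_[p]) : ℚ_[p])) := by
    rw [Units.val_neg, Units.val_mul]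
    push_cast
    ring
  constructor
  · rintro ⟨x, y, z, hne, he⟩
    by_contra hW
    set U : ℚ_[p] := ((u : ℤ_[p]) : ℚ_[p]) with hU
    set V : ℚ_[p] := ((v : ℤ_[p]) : ℚ_[p]) with hV
    have hVne : V ≠ 0 := unit_coe_ne_zero v
    have hkey : ((p : ℚ_[p]) * V * y) ^ 2 -
        ((((-(u * v) : ℤ_[p]ˣ)) : ℤ_[p]) : ℚ_[p]) * ((p : ℚ_[p]) * x) ^ 2 =
        (p : ℚ_[p]) * V * z ^ 2 := by
      rw [hWcast]
      linear_combination (-(p : ℚ_[p]) * V) * he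
    by_cases hz : z = 0
    · have h0 : ((p : ℚ_[p]) * V * y) ^ 2 =
          ((((-(u * v) : ℤ_[p]ˣ)) : ℤ_[p]) : ℚ_[p]) * ((p : ℚ_[p]) * x) ^ 2 := by
        rw [hz] at hkey
        linear_combination hkey
      obtain ⟨h1, h2⟩ := nonsquare_e1 hW h0
      have hy0 : y = 0 := by
        rcases mul_eq_zero.1 h1 with h3 | h3
        · exact absurd h3 (mul_ne_zero pQ_ne_zero hVne)
        · exact h3
      have hx0 : x = 0 := by
        rcases mul_eq_zero.1 h2 with h3 | h3
        · exact absurd h3 pQ_ne_zero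
        · exact h3
      exact hne ⟨hx0, hy0, hz⟩
    · have hnb : ¬((p : ℚ_[p]) * V * y = 0 ∧ (p : ℚ_[p]) * x = 0) := by
        rintro ⟨h1, h2⟩
        have hy0 : y = 0 := by
          rcases mul_eq_zero.1 h1 with h3 | h3
          · exact absurd h3 (mul_ne_zero pQ_ne_zero hVne)
          · exact h3
        have hx0 : x = 0 := by
          rcases mul_eq_zero.1 h2 with h3 | h3
          · exact absurd h3 pQ_ne_zero
          · exact h3
        rw [hx0, hy0] at he
        have hz0 : z = 0 := by
          have : z ^ 2 = 0 := by linear_combination he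
          exact pow_eq_zero_iff two_ne_zero |>.1 this
        exact hne ⟨hx0, hy0, hz0⟩
      have hval := nonsquare_val_even hW hnb
      have hodd : ((p : ℚ_[p]) * V * z ^ 2).valuation = 1 + 2 * z.valuation := by
        rw [Padic.valuation_mul (mul_ne_zero pQ_ne_zero hVne) (pow_ne_zero 2 hz),
          Padic.valuation_mul pQ_ne_zero hVne, Padic.valuation_p, hV, val_unit_coe,
          val_sq _ hz]
        ring
      obtain ⟨m, hm⟩ := hval.2
      rw [hkey, hodd] at hm
      omega
  · intro hsq
    obtain ⟨s, hs⟩ := hsq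
    have hsne : s ≠ 0 := by
      intro h0
      rw [h0, mul_zero] at hs
      exact toZMod_unit_ne_zero (-(u * v)) hs
    set r : ZMod p := s * toZMod ((v⁻¹ : ℤ_[p]ˣ) : ℤ_[p]) with hrdef
    set c : ℤ_[p] := -((u : ℤ_[p]) * ((v⁻¹ : ℤ_[p]ˣ) : ℤ_[p])) with hcdef
    have hres : toZMod c = r ^ 2 := by
      have hWres : toZMod (((-(u * v) : ℤ_[p]ˣ)) : ℤ_[p]) =
          -(toZMod (u : ℤ_[p]) * toZMod (v : ℤ_[p])) := by
        rw [Units.val_neg, Units.val_mul, map_neg, map_mul]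
      have hv0 := toZMod_unit_ne_zero v
      rw [hcdef, map_neg, map_mul, toZMod_inv, hrdef, toZMod_inv]
      rw [hWres] at hs
      have hBi : toZMod (v : ℤ_[p]) * (toZMod (v : ℤ_[p]))⁻¹ = 1 := mul_inv_cancel₀ hv0
      linear_combination ((toZMod (v : ℤ_[p]))⁻¹ * (toZMod (v : ℤ_[p]))⁻¹) * hs +
        (toZMod (u : ℤ_[p]) * (toZMod (v : ℤ_[p]))⁻¹) * hBi
    have hrne : r ≠ 0 := mul_ne_zero hsne (toZMod_unit_ne_zero _)
    obtain ⟨t, ht⟩ := exists_sqrt hp2 hrne hres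
    have hid : (u : ℤ_[p]) + (v : ℤ_[p]) * t ^ 2 = 0 := by
      have hvv : (v : ℤ_[p]) * ((v⁻¹ : ℤ_[p]ˣ) : ℤ_[p]) = 1 := v.mul_inv
      rw [ht, hcdef]
      linear_combination (-(u : ℤ_[p])) * hvv
    refine ⟨1, (t : ℚ_[p]), 0, fun ⟨h1, _, _⟩ => one_ne_zero h1, ?_⟩
    have hc := congrArg (fun r : ℤ_[p] => (r : ℚ_[p])) hid
    push_cast at hc
    linear_combination (-(p : ℚ_[p])) * hc

end cases
section final
open PadicInt
variable {p : ℕ} [Fact p.Prime]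

private lemma sol_symm_iff (a b : ℚ_[p]) : Sol p a b ↔ Sol p b a := ⟨sol_symm, sol_symm⟩

private lemma sol_mul_sq_iff' {a b : ℚ_[p]} (c : ℚ_[p]) (hc : c ≠ 0) :
    Sol p a (c ^ 2 * b) ↔ Sol p a b := by
  rw [sol_symm_iff, sol_mul_sq_iff c hc, sol_symm_iff]

private lemma zpow_congr {x : ℚ} (hsq : x ^ 2 = 1) {m n : ℤ} (h : (2 : ℤ) ∣ (m - n)) :
    x ^ m = x ^ n := by
  have hx0 : x ≠ 0 := by
    intro h0
    rw [h0] at hsq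
    norm_num at hsq
  obtain ⟨k, hk⟩ := h
  have hm : m = n + 2 * k := by omega
  rw [hm, zpow_add₀ hx0, zpow_mul, zpow_two, ← sq, hsq, one_zpow, mul_one]

private lemma legendre_congr {m n : ℤ} (h : ((m : ℤ) : ZMod p) = ((n : ℤ) : ZMod p)) :
    legendreSym p m = legendreSym p n := by
  unfold legendreSym
  rw [h]

end final

theorem hilbert_symbol_formula (p : ℕ) [Fact p.Prime] (hp2 : p ≠ 2)
    (α β : ℤ) (a' b' : ℤ_[p]ˣ) (a b : ℚ_[p]) (ha0 : a ≠ 0) (hb0 : b ≠ 0)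
    (ha : a = (p : ℚ_[p]) ^ α * ((a' : ℤ_[p]) : ℚ_[p]))
    (hb : b = (p : ℚ_[p]) ^ β * ((b' : ℤ_[p]) : ℚ_[p])) :
    padicHilbertSym p a b =
      (-1 : ℚ) ^ ((((p - 1) / 2 : ℕ) : ℤ) * α * β) *
        ((legendreSym p ((PadicInt.toZMod (a' : ℤ_[p])).val : ℤ) : ℚ)) ^ β *
        ((legendreSym p ((PadicInt.toZMod (b' : ℤ_[p])).val : ℤ) : ℚ)) ^ α := by
  classical
  have hodd : p % 2 = 1 := Nat.odd_iff.1 ((Fact.out (p := p.Prime)).odd_of_ne_two hp2)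
  have hpos : Sol p a b → padicHilbertSym p a b = 1 := fun h => if_pos h
  have hneg : ¬Sol p a b → padicHilbertSym p a b = -1 := fun h => if_neg h
  have hLA2 : ((legendreSym p (resInt a') : ℤ) : ℚ) ^ 2 = 1 := by
    exact_mod_cast congrArg (fun z : ℤ => (z : ℚ)) (legendreSym.sq_one p (resInt_cast_ne_zero a'))
  have hLB2 : ((legendreSym p (resInt b') : ℤ) : ℚ) ^ 2 = 1 := by
    exact_mod_cast congrArg (fun z : ℤ => (z : ℚ)) (legendreSym.sq_one p (resInt_cast_ne_zero b'))
  have hm1 : ((-1 : ℚ)) ^ 2 = 1 := by norm_num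
  have hεcast : ((legendreSym p (-1) : ℤ) : ℚ) = (-1 : ℚ) ^ ((((p - 1) / 2 : ℕ) : ℤ)) := by
    rw [legendreSym.at_neg_one hp2, ZMod.χ₄_eq_neg_one_pow hodd, zpow_natCast]
    push_cast
    congr 1
    omega
  have hared : Sol p a b ↔
      Sol p ((p : ℚ_[p]) ^ (α % 2) * ((a' : ℤ_[p]) : ℚ_[p]))
        ((p : ℚ_[p]) ^ (β % 2) * ((b' : ℤ_[p]) : ℚ_[p])) := by
    rw [ha, hb]
    have h1 : ∀ (γ : ℤ) (w : ℤ_[p]ˣ), (p : ℚ_[p]) ^ γ * ((w : ℤ_[p]) : ℚ_[p]) =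
        ((p : ℚ_[p]) ^ (γ / 2)) ^ 2 * ((p : ℚ_[p]) ^ (γ % 2) * ((w : ℤ_[p]) : ℚ_[p])) := by
      intro γ w
      rw [← mul_assoc]
      congr 1
      rw [← zpow_natCast ((p : ℚ_[p]) ^ (γ / 2)) 2, ← zpow_mul, ← zpow_add₀ pQ_ne_zero]
      congr 1
      push_cast
      omega
    rw [h1 α a', h1 β b', sol_mul_sq_iff _ (zpow_ne_zero _ pQ_ne_zero),
      sol_mul_sq_iff' _ (zpow_ne_zero _ pQ_ne_zero)]
  show padicHilbertSym p a b =
      (-1 : ℚ) ^ ((((p - 1) / 2 : ℕ) : ℤ) * α * β) *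
        ((legendreSym p (resInt a') : ℤ) : ℚ) ^ β *
        ((legendreSym p (resInt b') : ℤ) : ℚ) ^ α
  rcases Int.emod_two_eq α with hα | hα <;> rcases Int.emod_two_eq β with hβ | hβ
  · -- α, β both even
    have hsol : Sol p a b := hared.2 (by
      rw [hα, hβ, zpow_zero, one_mul, one_mul]
      exact sol_unit_unit hp2 a' b')
    obtain ⟨k, hk⟩ : (2 : ℤ) ∣ α := Int.dvd_of_emod_eq_zero hα
    obtain ⟨l, hl⟩ : (2 : ℤ) ∣ β := Int.dvd_of_emod_eq_zero hβ
    rw [hpos hsol,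
      zpow_congr hm1 (m := (((p - 1) / 2 : ℕ) : ℤ) * α * β) (n := 0)
        ⟨(((p - 1) / 2 : ℕ) : ℤ) * k * β, by rw [hk]; ring⟩,
      zpow_congr hLA2 (m := β) (n := 0) ⟨l, by omega⟩,
      zpow_congr hLB2 (m := α) (n := 0) ⟨k, by omega⟩]
    norm_num
  · -- α even, β odd
    have hiff : Sol p a b ↔ IsSquare (toZMod (a' : ℤ_[p])) := by
      rw [hared, hα, hβ, zpow_zero, zpow_one, one_mul, sol_symm_iff]
      exact sol_p_unit_iff hp2 b' a'
    obtain ⟨k, hk⟩ : (2 : ℤ) ∣ α := Int.dvd_of_emod_eq_zero hα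
    have hval : padicHilbertSym p a b = ((legendreSym p (resInt a') : ℤ) : ℚ) := by
      rcases legendre_resInt_one_or a' with hL | hL
      · rw [hpos (hiff.2 ((legendre_resInt_eq_one_iff a').1 hL)), hL]
        norm_num
      · rw [hneg (fun hs => ((legendre_resInt_eq_neg_one_iff a').1 hL) (hiff.1 hs)), hL]
        norm_num
    rw [hval,
      zpow_congr hm1 (m := (((p - 1) / 2 : ℕ) : ℤ) * α * β) (n := 0)
        ⟨(((p - 1) / 2 : ℕ) : ℤ) * k * β, by rw [hk]; ring⟩,
      zpow_congr hLA2 (m := β) (n := 1) ⟨(β - 1) / 2, by omega⟩,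
      zpow_congr hLB2 (m := α) (n := 0) ⟨k, by omega⟩]
    norm_num
  · -- α odd, β even
    have hiff : Sol p a b ↔ IsSquare (toZMod (b' : ℤ_[p])) := by
      rw [hared, hα, hβ, zpow_zero, zpow_one, one_mul]
      exact sol_p_unit_iff hp2 a' b'
    obtain ⟨l, hl⟩ : (2 : ℤ) ∣ β := Int.dvd_of_emod_eq_zero hβ
    have hval : padicHilbertSym p a b = ((legendreSym p (resInt b') : ℤ) : ℚ) := by
      rcases legendre_resInt_one_or b' with hL | hL
      · rw [hpos (hiff.2 ((legendre_resInt_eq_one_iff b').1 hL)), hL]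
        norm_num
      · rw [hneg (fun hs => ((legendre_resInt_eq_neg_one_iff b').1 hL) (hiff.1 hs)), hL]
        norm_num
    rw [hval,
      zpow_congr hm1 (m := (((p - 1) / 2 : ℕ) : ℤ) * α * β) (n := 0)
        ⟨(((p - 1) / 2 : ℕ) : ℤ) * α * l, by rw [hl]; ring⟩,
      zpow_congr hLA2 (m := β) (n := 0) ⟨l, by omega⟩,
      zpow_congr hLB2 (m := α) (n := 1) ⟨(α - 1) / 2, by omega⟩]
    norm_num
  · -- both odd
    have hiff : Sol p a b ↔ IsSquare (toZMod ((-(a' * b') : ℤ_[p]ˣ) : ℤ_[p])) := by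
      rw [hared, hα, hβ, zpow_one]
      exact sol_pp_iff hp2 a' b'
    have hcast : ((resInt (-(a' * b')) : ℤ) : ZMod p) =
        (((-1) * (resInt a' * resInt b') : ℤ) : ZMod p) := by
      rw [resInt_cast]
      push_cast
      rw [resInt_cast, resInt_cast, map_neg, map_mul]
      ring
    have hLW : legendreSym p (resInt (-(a' * b'))) =
        legendreSym p (-1) * (legendreSym p (resInt a') * legendreSym p (resInt b')) := by
      rw [legendre_congr hcast, legendreSym.mul, legendreSym.mul]
    have hval : padicHilbertSym p a b = ((legendreSym p (resInt (-(a' * b'))) : ℤ) : ℚ) := by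
      rcases legendre_resInt_one_or (-(a' * b')) with hL | hL
      · rw [hpos (hiff.2 ((legendre_resInt_eq_one_iff _).1 hL)), hL]
        norm_num
      · rw [hneg (fun hs => ((legendre_resInt_eq_neg_one_iff _).1 hL) (hiff.1 hs)), hL]
        norm_num
    have hab : (α * β) % 2 = 1 := by
      rw [Int.mul_emod, hα, hβ]
      decide
    obtain ⟨k, hk⟩ : (2 : ℤ) ∣ α * β - 1 := by omega
    rw [hval, hLW,
      zpow_congr hm1 (m := (((p - 1) / 2 : ℕ) : ℤ) * α * β) (n := (((p - 1) / 2 : ℕ) : ℤ))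
        ⟨(((p - 1) / 2 : ℕ) : ℤ) * k, by linear_combination (((p - 1) / 2 : ℕ) : ℤ) * hk⟩,
      zpow_congr hLA2 (m := β) (n := 1) ⟨(β - 1) / 2, by omega⟩,
      zpow_congr hLB2 (m := α) (n := 1) ⟨(α - 1) / 2, by omega⟩, zpow_one, zpow_one]
    push_cast [hεcast]
    ring
end aux
end

section
/- Let X ⊕ O₁ be the quadratic form on F₂³ given by Q(x₁,x₂,x₃) = x₁x₂. Then 𝒩(X ⊕ O₁) = {0, 1, 2}: there exist bilinear forms on F₂³ with diagonal values realizing Q and with nullity 0, 1, and 2, and no other nullities occur. -/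
/-- The set of nullities of bilinear forms whose diagonal realizes `Q`. -/
def nullitySet {W : Type*} [AddCommGroup W] [Module (ZMod 2) W] (Q : W → ZMod 2) : Set ℕ :=
  {n | ∃ B : W →ₗ[ZMod 2] W →ₗ[ZMod 2] ZMod 2, (∀ x, B x x = Q x) ∧
    Module.finrank (ZMod 2) W - Module.finrank (ZMod 2) (LinearMap.range B) = n}

open Module Matrix

namespace NullityAux

abbrev W3 := Fin 3 → ZMod 2

noncomputable def Bof (M : Matrix (Fin 3) (Fin 3) (ZMod 2)) :
    W3 →ₗ[ZMod 2] W3 →ₗ[ZMod 2] ZMod 2 := Matrix.toLinearMap₂' (ZMod 2) M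

attribute [local simp] Matrix.toLinearMap₂'_apply Fin.sum_univ_three smul_eq_mul
  Matrix.cons_val_zero Matrix.cons_val_one Matrix.head_cons Matrix.cons_val_two
  Matrix.tail_cons Matrix.vecHead Matrix.vecTail Pi.single_apply

lemma finrankW3 : finrank (ZMod 2) W3 = 3 := Module.finrank_fin_fun _

-- rank 1 witness
noncomputable def B1 := Bof !![0,1,0;0,0,0;0,0,0]

lemma B1_apply (x y : W3) : B1 x y = x 0 * y 1 := by simp [B1, Bof]

lemma B1_diag (x : W3) : B1 x x = x 0 * x 1 := B1_apply x x

noncomputable def φ1 : W3 →ₗ[ZMod 2] ZMod 2 := LinearMap.proj 1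

lemma B1_range : LinearMap.range B1 = Submodule.span (ZMod 2) {φ1} := by
  apply le_antisymm
  · rintro f ⟨x, rfl⟩
    have h : B1 x = x 0 • φ1 := by
      ext y; simp [B1_apply, φ1]
    rw [h]
    exact Submodule.smul_mem _ _ (Submodule.mem_span_singleton_self φ1)
  · rw [Submodule.span_le, Set.singleton_subset_iff]
    exact ⟨Pi.single 0 1, by ext y; simp [B1_apply, φ1]⟩

lemma B1_rank : finrank (ZMod 2) (LinearMap.range B1) = 1 := by
  rw [B1_range]
  exact finrank_span_singleton (by
    intro h
    have : φ1 (Pi.single 1 1) = 0 := by rw [h]; rfl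
    simp [φ1] at this)

-- rank 2 witness
noncomputable def B2 := Bof !![0,1,1;0,0,0;1,0,0]

lemma B2_apply (x y : W3) : B2 x y = x 0 * y 1 + x 0 * y 2 + x 2 * y 0 := by
  simp [B2, Bof]

lemma B2_diag (x : W3) : B2 x x = x 0 * x 1 := by
  rw [B2_apply]
  linear_combination CharTwo.add_self_eq_zero (x 0 * x 2)

lemma B2_ker : LinearMap.ker B2 = Submodule.span (ZMod 2) {(Pi.single 1 1 : W3)} := by
  ext x
  rw [LinearMap.mem_ker, Submodule.mem_span_singleton]
  constructor
  · intro hx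
    have h0 : x 2 = 0 := by
      have := LinearMap.congr_fun hx (Pi.single 0 1)
      simpa [B2_apply] using this
    have h1 : x 0 = 0 := by
      have := LinearMap.congr_fun hx (Pi.single 1 1)
      simpa [B2_apply] using this
    exact ⟨x 1, by funext i; fin_cases i <;> simp [h0, h1]⟩
  · rintro ⟨c, rfl⟩
    ext y
    simp [B2_apply]

lemma B2_rank : finrank (ZMod 2) (LinearMap.range B2) = 2 := by
  have h := LinearMap.finrank_range_add_finrank_ker B2
  rw [finrankW3, B2_ker, finrank_span_singleton (by
    intro h
    have := congrFun h 1
    simp at this)] at h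
  omega

-- rank 3 witness
noncomputable def B3 := Bof !![0,1,1;0,0,1;1,1,0]

lemma B3_apply (x y : W3) :
    B3 x y = x 0 * y 1 + x 0 * y 2 + x 1 * y 2 + x 2 * y 0 + x 2 * y 1 := by
  simp [B3, Bof]; ring

lemma B3_diag (x : W3) : B3 x x = x 0 * x 1 := by
  rw [B3_apply]
  linear_combination CharTwo.add_self_eq_zero (x 0 * x 2) + CharTwo.add_self_eq_zero (x 1 * x 2)

lemma B3_ker : LinearMap.ker B3 = ⊥ := by
  rw [eq_bot_iff]
  intro x hx
  rw [LinearMap.mem_ker] at hx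
  have h0 : x 2 = 0 := by
    have := LinearMap.congr_fun hx (Pi.single 0 1)
    simpa [B3_apply] using this
  have h1 : x 0 + x 2 = 0 := by
    have := LinearMap.congr_fun hx (Pi.single 1 1)
    simpa [B3_apply] using this
  have h2 : x 0 + x 1 = 0 := by
    have := LinearMap.congr_fun hx (Pi.single 2 1)
    simpa [B3_apply] using this
  have hx0 : x 0 = 0 := by rw [h0, add_zero] at h1; exact h1
  have hx1 : x 1 = 0 := by rw [hx0, zero_add] at h2; exact h2
  simp only [Submodule.mem_bot]
  funext i; fin_cases i <;> simp [h0, hx0, hx1]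

lemma B3_rank : finrank (ZMod 2) (LinearMap.range B3) = 3 := by
  have h := LinearMap.finrank_range_add_finrank_ker B3
  rw [finrankW3, B3_ker, finrank_bot] at h
  omega

end NullityAux

theorem nullitySet_X_oplus_O1 :
    nullitySet (fun v : Fin 3 → ZMod 2 => v 0 * v 1) = {0, 1, 2} := by
  open NullityAux in
  ext n
  simp only [nullitySet, Set.mem_setOf_eq, Set.mem_insert_iff, Set.mem_singleton_iff]
  constructor
  · rintro ⟨B, hB, rfl⟩
    have hBne : B ≠ 0 := by
      intro h
      have := hB ![1, 1, 0]
      rw [h] at this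
      simp at this
    have hr : finrank (ZMod 2) (LinearMap.range B) ≠ 0 := by
      intro h
      rw [Submodule.finrank_eq_zero, LinearMap.range_eq_bot] at h
      exact hBne h
    rw [NullityAux.finrankW3]
    omega
  · rintro (rfl | rfl | rfl)
    · exact ⟨NullityAux.B3, NullityAux.B3_diag, by
        rw [NullityAux.finrankW3, NullityAux.B3_rank]⟩
    · exact ⟨NullityAux.B2, NullityAux.B2_diag, by
        rw [NullityAux.finrankW3, NullityAux.B2_rank]⟩
    · exact ⟨NullityAux.B1, NullityAux.B1_diag, by
        rw [NullityAux.finrankW3, NullityAux.B1_rank]⟩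
end
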